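/- Let 𝔥_1^λ be the 3-dimensional restricted Heisenberg Lie algebra over an algebraically closed field F of characteristic p > 2, with e_i^{[p]} = λ_i e_3 for the basis e_1, e_2, e_3, [e_1,e_2] = e_3. Then 𝔥_1^λ is isomorphic as a restricted Lie algebra to exactly one of the algebras given by λ = (0,0,0), λ = (1,0,0), or λ = (0,0,1); in particular there are exactly 3 isomorphism classes. -/

import Mathlib

open Finset Polynomial

/-- The Heisenberg Lie bracket on `F^(2m+1)`: `[e_i, e_{m+i}] = e_{2m}` (0-indexed),
with `e_{2m}` (the last basis vector) playing the role of the central element `e_{2m+1}`. -/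
def hBr (F : Type*) [Field F] (m : ℕ) (g h : Fin (2*m+1) → F) : Fin (2*m+1) → F :=
  Pi.single (Fin.last (2*m))
    (∑ i : Fin m,
      (g ⟨i.1, by have := i.2; omega⟩ * h ⟨m + i.1, by have := i.2; omega⟩
        - g ⟨m + i.1, by have := i.2; omega⟩ * h ⟨i.1, by have := i.2; omega⟩))

/-- The central basis vector `e_{2m+1}` of the Heisenberg algebra. -/
def eC (F : Type*) [Field F] (m : ℕ) : Fin (2*m+1) → F := Pi.single (Fin.last (2*m)) 1

/-- Extension of a bilinear bracket on `F^n` to `(Polynomial F)^n` via structure constants. -/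
noncomputable def brP (F : Type*) [Field F] (n : ℕ)
    (br : (Fin n → F) → (Fin n → F) → (Fin n → F))
    (x y : Fin n → Polynomial F) : Fin n → Polynomial F :=
  fun k => ∑ i : Fin n, ∑ j : Fin n,
    x i * y j * Polynomial.C (br (Pi.single i 1) (Pi.single j 1) k)

/-- `(ad (t g + h))^(p-1) (g)` computed with polynomial coefficients in `t`. -/
noncomputable def adP (F : Type*) [Field F] (n p : ℕ)
    (br : (Fin n → F) → (Fin n → F) → (Fin n → F)) (g h : Fin n → F) :
    Fin n → Polynomial F :=
  (fun z => brP F n br ((Polynomial.X : Polynomial F) • (fun j => Polynomial.C (g j))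
      + (fun j => Polynomial.C (h j))) z)^[p-1] (fun j => Polynomial.C (g j))

/-- The total correction term `Σ_{i=1}^{p-1} s_i(g,h)`, where `i·s_i(g,h)` is the coefficient
of `t^{i-1}` in `(ad (t g + h))^{p-1}(g)`. -/
noncomputable def sSum (F : Type*) [Field F] (n p : ℕ)
    (br : (Fin n → F) → (Fin n → F) → (Fin n → F)) (g h : Fin n → F) : Fin n → F :=
  ∑ i ∈ Finset.range (p-1),
    (((i+1 : ℕ) : F))⁻¹ • (fun k => (adP F n p br g h k).coeff i)

/-- The three axioms of a `[p]`-operator on the Lie algebra `(F^n, br)`. -/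
def IsPMap (F : Type*) [Field F] (n p : ℕ)
    (br : (Fin n → F) → (Fin n → F) → (Fin n → F))
    (pmap : (Fin n → F) → (Fin n → F)) : Prop :=
  (∀ (a : F) (g : Fin n → F), pmap (a • g) = a ^ p • pmap g) ∧
  (∀ g h, pmap (g + h) = pmap g + pmap h + sSum F n p br g h) ∧
  (∀ g h, br (pmap g) h = (fun x => br g x)^[p] h)

/-- The `[p]`-operator on `𝔥_m` (for `p > 2`) determined by the linear form `λ`:
`(Σ a_i e_i)^{[p]} = (Σ a_i^p λ_i) e_{2m+1}`. -/
def pLam (F : Type*) [Field F] (p m : ℕ) (lam : Fin (2*m+1) → F)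
    (g : Fin (2*m+1) → F) : Fin (2*m+1) → F :=
  (∑ i, (g i) ^ p * lam i) • eC F m

/-- Restricted Lie algebra isomorphism of `𝔥_1^λ` and `𝔥_1^{λ'}` (`p > 2`, where the
`[p]`-operator determined by `λ` is `g ↦ (Σ g_i^p λ_i) e_3`). -/
def H1RestrictedIso (F : Type*) [Field F] (p : ℕ) (lam lam' : Fin (2*1+1) → F) : Prop :=
  ∃ Ψ : (Fin (2*1+1) → F) ≃ₗ[F] (Fin (2*1+1) → F),
    (∀ g h, Ψ (hBr F 1 g h) = hBr F 1 (Ψ g) (Ψ h)) ∧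
    (∀ g, Ψ (pLam F p 1 lam g) = pLam F p 1 lam' (Ψ g))


section HeisenbergAux

lemma hBr1 (F : Type*) [Field F] (g h : Fin (2*1+1) → F) :
    hBr F 1 g h = Pi.single (Fin.last 2) (g 0 * h 1 - g 1 * h 0) := by
  simp [hBr, Fin.sum_univ_one]

lemma pLam1 (F : Type*) [Field F] (p : ℕ) (lam g : Fin (2*1+1) → F) :
    pLam F p 1 lam g
      = Pi.single (Fin.last 2) (g 0 ^ p * lam 0 + g 1 ^ p * lam 1 + g 2 ^ p * lam 2) := by
  simp [pLam, eC, Fin.sum_univ_three, smul_eq_mul]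
  funext k
  rcases eq_or_ne k (Fin.last 2) with h | h
  · subst h; simp
  · have h' : k ≠ 2 := h
    simp [Pi.single_eq_of_ne h']

def psiL (F : Type*) [Field F] (a b c d x y μ : F) :
    (Fin (2*1+1) → F) →ₗ[F] (Fin (2*1+1) → F) where
  toFun g := ![a * g 0 + b * g 1, c * g 0 + d * g 1, x * g 0 + y * g 1 + μ * g 2]
  map_add' g h := by funext k; fin_cases k <;> simp <;> ring
  map_smul' r g := by funext k; fin_cases k <;> simp <;> ring

lemma psiL_apply (F : Type*) [Field F] (a b c d x y μ : F) (g : Fin (2*1+1) → F) :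
    psiL F a b c d x y μ g
      = ![a * g 0 + b * g 1, c * g 0 + d * g 1, x * g 0 + y * g 1 + μ * g 2] := rfl

lemma sl0 (F : Type*) [Field F] (v : F) :
    (Pi.single (Fin.last 2) v : Fin (2*1+1) → F) 0 = 0 := by
  have h : (0 : Fin (2*1+1)) ≠ Fin.last 2 := by decide
  exact Pi.single_eq_of_ne h v

lemma sl1 (F : Type*) [Field F] (v : F) :
    (Pi.single (Fin.last 2) v : Fin (2*1+1) → F) 1 = 0 := by
  have h : (1 : Fin (2*1+1)) ≠ Fin.last 2 := by decide
  exact Pi.single_eq_of_ne h v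

lemma sl2 (F : Type*) [Field F] (v : F) :
    (Pi.single (Fin.last 2) v : Fin (2*1+1) → F) 2 = v := by
  have h : (2 : Fin (2*1+1)) = Fin.last 2 := by decide
  rw [h, Pi.single_eq_same]

lemma s00 (F : Type*) [Field F] (v : F) :
    (Pi.single (0 : Fin (2*1+1)) v : Fin (2*1+1) → F) 0 = v := by
  rw [Pi.single_eq_same]

lemma s01 (F : Type*) [Field F] (v : F) :
    (Pi.single (0 : Fin (2*1+1)) v : Fin (2*1+1) → F) 1 = 0 := by
  have h : (1 : Fin (2*1+1)) ≠ 0 := by decide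
  exact Pi.single_eq_of_ne h v

lemma s02 (F : Type*) [Field F] (v : F) :
    (Pi.single (0 : Fin (2*1+1)) v : Fin (2*1+1) → F) 2 = 0 := by
  have h : (2 : Fin (2*1+1)) ≠ 0 := by decide
  exact Pi.single_eq_of_ne h v

lemma s10 (F : Type*) [Field F] (v : F) :
    (Pi.single (1 : Fin (2*1+1)) v : Fin (2*1+1) → F) 0 = 0 := by
  have h : (0 : Fin (2*1+1)) ≠ 1 := by decide
  exact Pi.single_eq_of_ne h v

lemma s11 (F : Type*) [Field F] (v : F) :
    (Pi.single (1 : Fin (2*1+1)) v : Fin (2*1+1) → F) 1 = v := by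
  rw [Pi.single_eq_same]

lemma lastmul : Fin.last (2*1) = Fin.last 2 := rfl

lemma brCond (F : Type*) [Field F] (a b c d x y μ : F) (hdet : a * d - b * c = μ)
    (g h : Fin (2*1+1) → F) :
    psiL F a b c d x y μ (hBr F 1 g h)
      = hBr F 1 (psiL F a b c d x y μ g) (psiL F a b c d x y μ h) := by
  rw [hBr1, hBr1]
  rw [psiL_apply, psiL_apply, psiL_apply]
  funext k
  fin_cases k
  · simp [sl0, sl1, sl2]
  · simp [sl0, sl1, sl2]
  · simp [sl0, sl1, sl2]
    linear_combination -(g 0 * h 1 - g 1 * h 0) * hdet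

lemma pCond (F : Type*) [Field F] (p : ℕ) [Fact p.Prime] [CharP F p]
    (lam lam' : Fin (2*1+1) → F) (a b c d x y μ : F)
    (h1 : μ * lam 0 = a^p * lam' 0 + c^p * lam' 1 + x^p * lam' 2)
    (h2 : μ * lam 1 = b^p * lam' 0 + d^p * lam' 1 + y^p * lam' 2)
    (h3 : μ * lam 2 = μ^p * lam' 2) (g : Fin (2*1+1) → F) :
    psiL F a b c d x y μ (pLam F p 1 lam g) = pLam F p 1 lam' (psiL F a b c d x y μ g) := by
  rw [pLam1, pLam1, psiL_apply, psiL_apply]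
  funext k
  fin_cases k <;> simp [sl0, sl1, sl2]
  simp only [add_pow_char, mul_pow]
  linear_combination (g 0)^p * h1 + (g 1)^p * h2 + (g 2)^p * h3

lemma mkIso (F : Type*) [Field F] (p : ℕ) [Fact p.Prime] [CharP F p]
    (lam lam' : Fin (2*1+1) → F) (a b c d x y μ : F)
    (hdet : a * d - b * c = μ) (hμ : μ ≠ 0)
    (h1 : μ * lam 0 = a^p * lam' 0 + c^p * lam' 1 + x^p * lam' 2)
    (h2 : μ * lam 1 = b^p * lam' 0 + d^p * lam' 1 + y^p * lam' 2)
    (h3 : μ * lam 2 = μ^p * lam' 2) :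
    H1RestrictedIso F p lam lam' := by
  refine ⟨LinearEquiv.ofLinear (psiL F a b c d x y μ)
    (psiL F (d/μ) (-b/μ) (-c/μ) (a/μ) ((y*c - x*d)/μ^2) ((x*b - y*a)/μ^2) (1/μ)) ?_ ?_,
    fun g h => brCond F a b c d x y μ hdet g h,
    fun g => pCond F p lam lam' a b c d x y μ h1 h2 h3 g⟩
  · apply LinearMap.ext; intro g
    funext k
    simp only [LinearMap.comp_apply, LinearMap.id_apply, psiL_apply]
    fin_cases k <;> simp <;> field_simp <;> subst hdet <;> ring
  · apply LinearMap.ext; intro g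
    funext k
    simp only [LinearMap.comp_apply, LinearMap.id_apply, psiL_apply]
    fin_cases k <;> simp <;> field_simp <;> subst hdet <;> ring

end HeisenbergAux

/-- over an algebraically closed field of characteristic `p > 2`, every
restricted structure `λ` on the 3-dimensional Heisenberg algebra `𝔥_1` is isomorphic to
exactly one of `λ = 0`, `λ = e_1^*`, `λ = e_3^*`: there are exactly 3 isomorphism classes. -/
theorem heisenberg3_classification (F : Type*) [Field F] [IsAlgClosed F] (p : ℕ)
    [Fact p.Prime] [CharP F p] (hp : 2 < p) (lam : Fin (2*1+1) → F) :
    (H1RestrictedIso F p lam 0 ∨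
      H1RestrictedIso F p lam (Pi.single (0 : Fin (2*1+1)) 1) ∨
      H1RestrictedIso F p lam (Pi.single (Fin.last (2*1)) 1)) ∧
    ¬ H1RestrictedIso F p (0 : Fin (2*1+1) → F) (Pi.single (0 : Fin (2*1+1)) 1) ∧
    ¬ H1RestrictedIso F p (0 : Fin (2*1+1) → F) (Pi.single (Fin.last (2*1)) 1) ∧
    ¬ H1RestrictedIso F p (Pi.single (0 : Fin (2*1+1)) 1) (Pi.single (Fin.last (2*1)) 1) := by
  have hp0 : p ≠ 0 := by omega
  have hppos : 0 < p := by omega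
  refine ⟨?_, ?_, ?_, ?_⟩
  · -- classification
    by_cases hz : lam 2 = 0
    · by_cases h0 : lam 0 = 0
      · by_cases h1 : lam 1 = 0
        · left
          refine mkIso F p lam 0 1 0 0 1 0 0 1 (by ring) one_ne_zero ?_ ?_ ?_ <;>
            simp [h0, h1, hz, zero_pow hp0]
        · right; left
          obtain ⟨b, hb⟩ := IsAlgClosed.exists_pow_nat_eq (lam 1) hppos
          have hbne : b ≠ 0 := by
            rintro rfl; rw [zero_pow hp0] at hb; exact h1 hb.symm
          refine mkIso F p lam (Pi.single 0 1) 0 b (-1/b) 0 0 0 1 (by field_simp; ring)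
            one_ne_zero ?_ ?_ ?_
          · simp [s00, s01, s02, h0, zero_pow hp0]
          · simp [s00, s01, s02, hb]
          · simp [s00, s01, s02, hz]
      · right; left
        obtain ⟨a, ha⟩ := IsAlgClosed.exists_pow_nat_eq (lam 0) hppos
        obtain ⟨b, hb⟩ := IsAlgClosed.exists_pow_nat_eq (lam 1) hppos
        have hane : a ≠ 0 := by
          rintro rfl; rw [zero_pow hp0] at ha; exact h0 ha.symm
        refine mkIso F p lam (Pi.single 0 1) a b 0 (1/a) 0 0 1 (by field_simp; ring)
          one_ne_zero ?_ ?_ ?_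
        · simp [s00, s01, s02, ha]
        · simp [s00, s01, s02, hb]
        · simp [s00, s01, s02, hz]
    · right; right
      obtain ⟨μ, hμ⟩ := IsAlgClosed.exists_pow_nat_eq (lam 2) (show 0 < p - 1 by omega)
      have hμne : μ ≠ 0 := by
        rintro rfl; rw [zero_pow (show p - 1 ≠ 0 by omega)] at hμ; exact hz hμ.symm
      obtain ⟨x, hx⟩ := IsAlgClosed.exists_pow_nat_eq (μ * lam 0) hppos
      obtain ⟨y, hy⟩ := IsAlgClosed.exists_pow_nat_eq (μ * lam 1) hppos
      refine mkIso F p lam (Pi.single (Fin.last (2*1)) 1) μ 0 0 1 x y μ (by ring)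
        hμne ?_ ?_ ?_
      · simp [lastmul, sl0, sl1, sl2, hx, zero_pow hp0]
      · simp [lastmul, sl0, sl1, sl2, hy, zero_pow hp0]
      · have hpow : μ ^ p = μ ^ (p - 1) * μ := by
          rw [← pow_succ]; congr 1; omega
        simp only [lastmul, sl0, sl1, sl2, hpow, hμ]
        ring
  · -- 0 vs e_1^*
    rintro ⟨Ψ, -, hP⟩
    have key := hP (Ψ.symm (Pi.single 0 1))
    rw [LinearEquiv.apply_symm_apply] at key
    have hz : pLam F p 1 (0 : Fin (2*1+1) → F) (Ψ.symm (Pi.single 0 1)) = 0 := by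
      rw [pLam1]; simp
    rw [hz, map_zero] at key
    have := congrFun key 2
    rw [pLam1] at this
    simp [lastmul, sl2, s00, s01, s02, one_pow, zero_pow hp0] at this
  · -- 0 vs e_3^*
    rintro ⟨Ψ, -, hP⟩
    have key := hP (Ψ.symm (Pi.single (Fin.last (2*1)) 1))
    rw [LinearEquiv.apply_symm_apply] at key
    have hz : pLam F p 1 (0 : Fin (2*1+1) → F) (Ψ.symm (Pi.single (Fin.last (2*1)) 1)) = 0 := by
      rw [pLam1]; simp
    rw [hz, map_zero] at key
    have := congrFun key 2
    rw [pLam1] at this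
    simp [lastmul, sl0, sl1, sl2, one_pow, zero_pow hp0] at this
  · -- e_1^* vs e_3^*
    rintro ⟨Ψ, hB, hP⟩
    -- Ψ eC is a multiple of eC
    have hbr := hB (Pi.single 0 1) (Pi.single 1 1)
    have he : hBr F 1 (Pi.single (0 : Fin (2*1+1)) 1) (Pi.single (1 : Fin (2*1+1)) 1)
        = eC F 1 := by
      rw [hBr1]; simp [s00, s01, s10, s11, eC]
    rw [he, hBr1] at hbr
    -- the p-map of eC vanishes for lam = e_1^*
    have key := hP (eC F 1)
    have hz : pLam F p 1 (Pi.single (0 : Fin (2*1+1)) 1) (eC F 1) = 0 := by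
      rw [pLam1]
      simp [eC, sl0, sl1, sl2, s00, s01, s02, zero_pow hp0]
    rw [hz, map_zero] at key
    have h2 := congrFun key.symm 2
    rw [pLam1] at h2
    simp only [lastmul, sl0, sl1, sl2, s00, s01, s02, Pi.zero_apply, one_pow, zero_pow hp0,
      mul_zero, mul_one, zero_add, add_zero] at h2
    -- so (Ψ eC) 2 ^ p = 0, hence (Ψ eC) 2 = 0
    have h3 : (Ψ (eC F 1)) 2 = 0 := by
      have := pow_eq_zero_iff hp0 |>.mp h2
      exact this
    -- but Ψ eC is supported at the last coordinate
    have h4 : Ψ (eC F 1) = 0 := by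
      rw [hbr]
      have h5 := congrFun hbr 2
      rw [sl2] at h5
      rw [← h5, h3, Pi.single_zero]
    have h6 : eC F 1 = 0 := by
      have := Ψ.map_eq_zero_iff.mp h4
      exact this
    have h7 := congrFun h6 2
    rw [eC] at h7
    rw [sl2] at h7
    exact one_ne_zero h7
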